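/- arXiv:1307.6477 — 3 statements merged into one kernel-verified Lean document; each statement's English description precedes it below -/
import Mathlib

section
/- Let G(U, V, E) be a (k, d, ε)-lossless expander with adjacency matrix A ∈ {0,1}^{n×N}. Then for every x ∈ ℝ^N with at most k nonzero entries, ‖Ax‖₁ ≥ (1 - 2ε) d ‖x‖₁. -/
open Finset

private lemma abel_identity (F w : ℕ → ℝ) (s : ℕ) :
    ∑ t ∈ range s, F t * w t =
      (∑ u ∈ range s, (∑ t ∈ range (u + 1), F t) * (w u - w (u + 1)))
        + (∑ t ∈ range s, F t) * w s := by
  induction s with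
  | zero => simp
  | succ s ih =>
    rw [sum_range_succ (fun t => F t * w t), ih,
      sum_range_succ (fun u => (∑ t ∈ range (u + 1), F t) * (w u - w (u + 1))),
      sum_range_succ F]
    ring

private lemma abel_ge (F w : ℕ → ℝ) (s : ℕ) (c : ℝ)
    (hw0 : ∀ t, 0 ≤ w t) (hwa : ∀ u, w (u + 1) ≤ w u)
    (hP : ∀ r, r ≤ s → c * r ≤ ∑ t ∈ range r, F t) :
    c * ∑ t ∈ range s, w t ≤ ∑ t ∈ range s, F t * w t := by
  have h1 := abel_identity F w s
  have h2 := abel_identity (fun _ => (1 : ℝ)) w s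
  simp only [sum_const, card_range, nsmul_eq_mul, mul_one, one_mul] at h2
  rw [h1, h2, mul_add, mul_sum]
  have hterm : ∀ u ∈ range s,
      c * (((u + 1 : ℕ) : ℝ) * (w u - w (u + 1)))
        ≤ (∑ t ∈ range (u + 1), F t) * (w u - w (u + 1)) := by
    intro u hu
    have hp := hP (u + 1) (Nat.succ_le_of_lt (mem_range.mp hu))
    push_cast at hp
    have hδ : 0 ≤ w u - w (u + 1) := by linarith [hwa u]
    push_cast
    nlinarith [mul_le_mul_of_nonneg_right hp hδ]
  have hlast : c * ((s : ℝ) * w s) ≤ (∑ t ∈ range s, F t) * w s := by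
    have hp := hP s le_rfl
    nlinarith [mul_le_mul_of_nonneg_right hp (hw0 s)]
  exact add_le_add (sum_le_sum hterm) hlast

open Classical in
theorem stmt_10 (n N d k : ℕ) (ε : ℝ) (A : Matrix (Fin n) (Fin N) ℝ)
    (hzeroone : ∀ i j, A i j = 0 ∨ A i j = 1)
    (hcol : ∀ j, (univ.filter (fun i => A i j ≠ 0)).card = d)
    (hexpand : ∀ X : Finset (Fin N), X.card ≤ k →
      ((univ.filter (fun i => ∃ j ∈ X, A i j ≠ 0)).card : ℝ) ≥ (1 - ε) * d * X.card)
    (x : Fin N → ℝ) (hx : (univ.filter (fun j => x j ≠ 0)).card ≤ k) :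
    ∑ i, |A.mulVec x i| ≥ (1 - 2 * ε) * d * ∑ j, |x j| := by
  classical
  set S : Finset (Fin N) := univ.filter (fun j => x j ≠ 0) with hS
  set s : ℕ := S.card with hs
  -- sorted enumeration of the support
  have iso := S.orderIsoOfFin rfl
  set g : Fin s → Fin N := fun r => (iso r : Fin N) with hg
  have hginj : Function.Injective g := by
    intro a b h
    exact iso.injective (Subtype.ext h)
  have hgmem : ∀ r, g r ∈ S := fun r => (iso r).2
  set σ : Equiv.Perm (Fin s) := Tuple.sort (fun r => -|x (g r)|) with hσ
  set L : Fin s → Fin N := fun r => g (σ r) with hL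
  have hLinj : Function.Injective L := hginj.comp σ.injective
  have hLmem : ∀ r, L r ∈ S := fun r => hgmem (σ r)
  have hanti : ∀ r r' : Fin s, r ≤ r' → |x (L r')| ≤ |x (L r)| := by
    intro r r' hrr'
    have := Tuple.monotone_sort (fun r => -|x (g r)|) hrr'
    simp only [Function.comp_apply] at this
    simpa [hL] using neg_le_neg_iff.mp this
  have himg : Finset.image L univ = S := by
    apply Finset.eq_of_subset_of_card_le
    · intro j hj
      rcases Finset.mem_image.mp hj with ⟨r, _, rfl⟩
      exact hLmem r
    · rw [Finset.card_image_of_injective _ hLinj, card_univ, Fintype.card_fin]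
  -- reindexing sums over the support
  have hreindex : ∀ f : Fin N → ℝ, (∀ j, j ∉ S → f j = 0) →
      ∑ j, f j = ∑ r : Fin s, f (L r) := by
    intro f hf
    rw [← Finset.sum_subset (Finset.subset_univ S) (fun j _ hj => hf j hj), ← himg,
      Finset.sum_image (fun a _ b _ h => hLinj h)]
  have hxnotS : ∀ j, j ∉ S → x j = 0 := by
    intro j hj
    by_contra hxj
    exact hj (Finset.mem_filter.mpr ⟨mem_univ j, hxj⟩)
  -- neighbor sets
  set E : Fin n → Finset (Fin s) := fun i => univ.filter (fun r => A i (L r) ≠ 0) with hE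
  set Nc : Fin s → ℕ :=
    fun r => (univ.filter (fun i => (E i).min = (r : WithTop (Fin s)))).card with hNc
  set w : ℕ → ℝ := fun t => if h : t < s then |x (L ⟨t, h⟩)| else 0 with hw
  set F : ℕ → ℝ := fun t => if h : t < s then ((Nc ⟨t, h⟩ : ℝ)) else 0 with hF
  set c : Fin n → ℝ :=
    fun i => if h : (E i).Nonempty then |x (L ((E i).min' h))| else 0 with hc
  have hw0 : ∀ t, 0 ≤ w t := by
    intro t; simp only [hw]; split <;> positivity
  have hwa : ∀ u, w (u + 1) ≤ w u := by
    intro u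
    simp only [hw]
    by_cases h1 : u + 1 < s
    · have h0 : u < s := Nat.lt_of_succ_lt h1
      rw [dif_pos h1, dif_pos h0]
      exact hanti _ _ (by simp [Fin.le_def])
    · rw [dif_neg h1]; split <;> positivity
  -- row sums over the support
  have hrow : ∀ i, A.mulVec x i = ∑ r : Fin s, A i (L r) * x (L r) := by
    intro i
    have : A.mulVec x i = ∑ j, A i j * x j := by
      simp [Matrix.mulVec, dotProduct]
    rw [this]
    exact hreindex (fun j => A i j * x j) (fun j hj => by simp [hxnotS j hj])
  -- per-row lower bound
  have hrowineq : ∀ i, 2 * c i - (∑ r : Fin s, |A i (L r) * x (L r)|) ≤ |A.mulVec x i| := by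
    intro i
    rw [hrow i]
    by_cases h : (E i).Nonempty
    · set r₀ := (E i).min' h with hr₀
      have hr₀mem : r₀ ∈ E i := (E i).min'_mem h
      have hA1 : A i (L r₀) = 1 := by
        have := (Finset.mem_filter.mp hr₀mem).2
        rcases hzeroone i (L r₀) with h' | h'
        · exact absurd h' this
        · exact h'
      have hcval : c i = |A i (L r₀) * x (L r₀)| := by
        rw [hc]; simp [dif_pos h, hA1, ← hr₀]
      set f : Fin s → ℝ := fun r => A i (L r) * x (L r) with hf
      have hsplit : f r₀ + ∑ r ∈ univ.erase r₀, f r = ∑ r : Fin s, f r :=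
        Finset.add_sum_erase _ f (mem_univ r₀)
      have habs1 : |f r₀| ≤ |∑ r : Fin s, f r| + |∑ r ∈ univ.erase r₀, f r| := by
        have : f r₀ = (∑ r : Fin s, f r) - ∑ r ∈ univ.erase r₀, f r := by
          linarith [hsplit]
        rw [this]
        exact abs_sub _ _
      have habs2 : |∑ r ∈ univ.erase r₀, f r| ≤ ∑ r ∈ univ.erase r₀, |f r| :=
        Finset.abs_sum_le_sum_abs _ _
      have hsplit2 : |f r₀| + ∑ r ∈ univ.erase r₀, |f r| = ∑ r : Fin s, |f r| :=
        Finset.add_sum_erase _ (fun r => |f r|) (mem_univ r₀)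
      rw [hcval]
      linarith
    · have hz : ∀ r : Fin s, A i (L r) = 0 := by
        intro r
        by_contra hr
        exact h ⟨r, Finset.mem_filter.mpr ⟨mem_univ r, hr⟩⟩
      rw [hc]
      simp [dif_neg h, hz]
  -- column sums
  have hcolsum : ∀ j, ∑ i, A i j = (d : ℝ) := by
    intro j
    have : ∀ i, A i j = if A i j ≠ 0 then (1 : ℝ) else 0 := by
      intro i
      rcases hzeroone i j with h' | h' <;> simp [h']
    calc ∑ i, A i j = ∑ i, if A i j ≠ 0 then (1 : ℝ) else 0 :=
          Finset.sum_congr rfl (fun i _ => this i)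
      _ = ((univ.filter (fun i => A i j ≠ 0)).card : ℝ) := Finset.sum_boole _ _
      _ = (d : ℝ) := by rw [hcol j]
  have hAabs : ∀ i j, |A i j| = A i j := by
    intro i j
    rcases hzeroone i j with h' | h' <;> simp [h']
  -- total absolute edge weight
  have htotal : ∑ i, ∑ r : Fin s, |A i (L r) * x (L r)|
      = (d : ℝ) * ∑ r : Fin s, |x (L r)| := by
    rw [Finset.sum_comm, Finset.mul_sum]
    refine Finset.sum_congr rfl (fun r _ => ?_)
    calc ∑ i, |A i (L r) * x (L r)| = ∑ i, A i (L r) * |x (L r)| := by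
          refine Finset.sum_congr rfl (fun i _ => ?_)
          rw [abs_mul, hAabs]
      _ = (∑ i, A i (L r)) * |x (L r)| := by rw [Finset.sum_mul]
      _ = (d : ℝ) * |x (L r)| := by rw [hcolsum]
  -- identify ∑ c i with weighted count of minima
  have hTi : ∀ i, c i = ∑ r : Fin s,
      if (E i).min = (r : WithTop (Fin s)) then |x (L r)| else 0 := by
    intro i
    by_cases h : (E i).Nonempty
    · have hm : (E i).min = ((E i).min' h : WithTop (Fin s)) := (Finset.coe_min' h).symm
      have : ∀ r : Fin s,
          ((E i).min = (r : WithTop (Fin s))) ↔ ((E i).min' h = r) := by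
        intro r
        rw [hm]
        exact WithTop.coe_inj
      simp only [this]
      rw [Finset.sum_ite_eq univ ((E i).min' h) (fun r => |x (L r)|)]
      rw [hc]
      simp [dif_pos h]
    · have hm : (E i).min = ⊤ := Finset.min_eq_top.mpr (Finset.not_nonempty_iff_eq_empty.mp h)
      rw [hc]
      simp [dif_neg h, hm]
  have hT : ∑ i, c i = ∑ r : Fin s, (Nc r : ℝ) * |x (L r)| := by
    rw [Finset.sum_congr rfl (fun i _ => hTi i), Finset.sum_comm]
    refine Finset.sum_congr rfl (fun r _ => ?_)
    rw [Finset.sum_ite, Finset.sum_const, Finset.sum_const, smul_zero, add_zero,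
      nsmul_eq_mul, hNc]
  -- prefix sums of F and the expansion bound
  have hcard_filter : ∀ m : ℕ, m ≤ s →
      (univ.filter (fun r : Fin s => (r : ℕ) < m)).card = m := by
    intro m hm
    have : univ.filter (fun r : Fin s => (r : ℕ) < m)
        = Finset.map (Fin.castLEEmb hm) univ := by
      ext r
      simp only [Finset.mem_filter, mem_univ, true_and, Finset.mem_map, Fin.castLEEmb,
        Function.Embedding.coeFn_mk]
      constructor
      · intro hr
        exact ⟨⟨r, hr⟩, rfl⟩
      · rintro ⟨a, _, rfl⟩
        exact a.2
    rw [this, Finset.card_map, card_univ, Fintype.card_fin]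
  have hprefix : ∀ m : ℕ, m ≤ s → (1 - ε) * d * m ≤ ∑ t ∈ range m, F t := by
    intro m hm
    set X : Finset (Fin N) := (univ.filter (fun r : Fin s => (r : ℕ) < m)).image L with hX
    have hXcard : X.card = m := by
      rw [hX, Finset.card_image_of_injective _ hLinj, hcard_filter m hm]
    have hXk : X.card ≤ k := hXcard ▸ le_trans hm (hs ▸ hx)
    have hexp := hexpand X hXk
    rw [hXcard] at hexp
    -- identify the neighborhood with the disjoint union over minima
    have hunion : univ.filter (fun i => ∃ j ∈ X, A i j ≠ 0)
        = (univ.filter (fun r : Fin s => (r : ℕ) < m)).biUnion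
            (fun r => univ.filter (fun i => (E i).min = (r : WithTop (Fin s)))) := by
      ext i
      simp only [Finset.mem_filter, mem_univ, true_and, Finset.mem_biUnion, hX,
        Finset.mem_image]
      constructor
      · rintro ⟨j, ⟨r, hr, rfl⟩, hAij⟩
        try simp only [Finset.mem_filter, mem_univ, true_and] at hr
        have hrE : r ∈ E i := Finset.mem_filter.mpr ⟨mem_univ r, hAij⟩
        have hne : (E i).Nonempty := ⟨r, hrE⟩
        exact ⟨(E i).min' hne, lt_of_le_of_lt (Finset.min'_le _ _ hrE) hr,
          (Finset.coe_min' hne).symm⟩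
      · rintro ⟨r, hr, hmin⟩
        try simp only [Finset.mem_filter, mem_univ, true_and] at hr hmin
        have hrE : r ∈ E i := Finset.mem_of_min hmin
        have hAij := (Finset.mem_filter.mp hrE).2
        exact ⟨L r, ⟨r, hr, rfl⟩, hAij⟩
    have hdisj : ∀ r ∈ univ.filter (fun r : Fin s => (r : ℕ) < m),
        ∀ r' ∈ univ.filter (fun r : Fin s => (r : ℕ) < m), r ≠ r' →
        Disjoint (univ.filter (fun i => (E i).min = (r : WithTop (Fin s))))
          (univ.filter (fun i => (E i).min = (r' : WithTop (Fin s)))) := by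
      intro r _ r' _ hrr'
      rw [Finset.disjoint_left]
      intro i hi hi'
      simp only [Finset.mem_filter, mem_univ, true_and] at hi hi'
      rw [hi] at hi'
      exact hrr' (WithTop.coe_inj.mp hi')
    have hcardsum : (univ.filter (fun i => ∃ j ∈ X, A i j ≠ 0)).card
        = ∑ r ∈ univ.filter (fun r : Fin s => (r : ℕ) < m), Nc r := by
      rw [hunion, Finset.card_biUnion hdisj]
    -- convert the Fin-indexed sum to the range-indexed sum of F
    have hsum_eq : ∑ t ∈ range m, F t
        = ((∑ r ∈ univ.filter (fun r : Fin s => (r : ℕ) < m), Nc r : ℕ) : ℝ) := by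
      push_cast
      rw [Finset.sum_filter]
      have : ∀ r : Fin s, (if (r : ℕ) < m then ((Nc r : ℝ)) else 0)
          = (fun t => if t < m then F t else 0) (r : ℕ) := by
        intro r
        simp only [hF, r.isLt, dif_pos, Fin.eta]
      rw [Finset.sum_congr rfl (fun r _ => this r),
        Fin.sum_univ_eq_sum_range (fun t => if t < m then F t else 0) s]
      rw [← Finset.sum_filter]
      congr 1
      ext t
      simp only [Finset.mem_filter, Finset.mem_range]
      omega
    rw [hsum_eq, ← hcardsum]
    exact hexp
  -- Abel summation
  have habel := abel_ge F w s ((1 - ε) * d) hw0 hwa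
    (fun r hr => by
      have := hprefix r hr
      linarith)
  have hwsum : ∑ t ∈ range s, w t = ∑ r : Fin s, |x (L r)| := by
    rw [← Fin.sum_univ_eq_sum_range w s]
    refine Finset.sum_congr rfl (fun r _ => ?_)
    simp [hw, r.isLt]
  have hFwsum : ∑ t ∈ range s, F t * w t = ∑ r : Fin s, (Nc r : ℝ) * |x (L r)| := by
    rw [← Fin.sum_univ_eq_sum_range (fun t => F t * w t) s]
    refine Finset.sum_congr rfl (fun r _ => ?_)
    simp [hw, hF, r.isLt]
  rw [hwsum, hFwsum] at habel
  -- put everything together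
  have hWeq : ∑ j, |x j| = ∑ r : Fin s, |x (L r)| :=
    hreindex (fun j => |x j|) (fun j hj => by simp [hxnotS j hj])
  set W : ℝ := ∑ r : Fin s, |x (L r)| with hW
  have hsumineq : 2 * (∑ i, c i) - (d : ℝ) * W ≤ ∑ i, |A.mulVec x i| := by
    have := Finset.sum_le_sum (fun i (_ : i ∈ univ) => hrowineq i)
    rw [Finset.sum_sub_distrib, htotal] at this
    calc 2 * (∑ i, c i) - (d : ℝ) * W = ∑ i, 2 * c i - (d : ℝ) * W := by
          rw [Finset.mul_sum]
      _ ≤ ∑ i, |A.mulVec x i| := this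
  rw [hT] at hsumineq
  rw [hWeq]
  have hkey : (1 - 2 * ε) * (d : ℝ) * W = 2 * ((1 - ε) * d * W) - (d : ℝ) * W := by ring
  rw [ge_iff_le, hkey]
  linarith [habel, hsumineq]
end

section
/- In a dyadic splitting of a set of s ≥ 1 columns, where a node with m columns (m ≥ 2) is split into children with ⌈m/2⌉ and ⌊m/2⌋ columns, at every level of the resulting binary tree the node sizes take at most two distinct values, and these two values differ by exactly 1; specifically, at level j all node sizes lie in {⌈s/2^j⌉, ⌊s/2^j⌋}. -/
theorem stmt_15 (s : ℕ) (hs : 1 ≤ s) (T : ℕ → ℕ → ℕ)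
    (hroot : T 0 0 = s)
    (hsplit : ∀ j i, T (j + 1) (2 * i) = (T j i + 1) / 2 ∧
      T (j + 1) (2 * i + 1) = T j i / 2) :
    ∀ j, (∀ i < 2 ^ j, T j i = (s + 2 ^ j - 1) / 2 ^ j ∨ T j i = s / 2 ^ j) ∧
      (s + 2 ^ j - 1) / 2 ^ j - s / 2 ^ j ≤ 1 := by
  have hc : ∀ j : ℕ, (s + 2 ^ j - 1) / 2 ^ j = (s - 1) / 2 ^ j + 1 := by
    intro j
    have h2 : (0:ℕ) < 2 ^ j := Nat.pow_pos (by norm_num)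
    rw [show s + 2 ^ j - 1 = (s - 1) + 2 ^ j by omega, Nat.add_div_right _ h2]
  have hab1 : ∀ j : ℕ, (s - 1) / 2 ^ j ≤ s / 2 ^ j := fun j =>
    Nat.div_le_div_right (by omega)
  have hab2 : ∀ j : ℕ, s / 2 ^ j ≤ (s - 1) / 2 ^ j + 1 := by
    intro j
    have h2 : (0:ℕ) < 2 ^ j := Nat.pow_pos (by norm_num)
    calc s / 2 ^ j ≤ ((s - 1) + 2 ^ j) / 2 ^ j := Nat.div_le_div_right (by omega)
      _ = (s - 1) / 2 ^ j + 1 := Nat.add_div_right _ h2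
  have key : ∀ j, ∀ i < 2 ^ j, T j i = (s - 1) / 2 ^ j + 1 ∨ T j i = s / 2 ^ j := by
    intro j
    induction j with
    | zero =>
      intro i hi
      interval_cases i
      simp only [pow_zero, Nat.div_one, hroot]
      omega
    | succ j ih =>
      intro i hi
      have hpow : (2:ℕ) ^ (j + 1) = 2 * 2 ^ j := by ring
      have hq : i / 2 < 2 ^ j := by omega
      have hT := ih (i / 2) hq
      have hsp := hsplit j (i / 2)
      have ha : (s - 1) / 2 ^ (j + 1) = ((s - 1) / 2 ^ j) / 2 := by
        rw [pow_succ, Nat.div_div_eq_div_mul]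
      have hb : s / 2 ^ (j + 1) = (s / 2 ^ j) / 2 := by
        rw [pow_succ, Nat.div_div_eq_div_mul]
      have h1 := hab1 j
      have h2 := hab2 j
      rcases (show i = 2 * (i / 2) ∨ i = 2 * (i / 2) + 1 by omega) with h | h
      · rw [h, hsp.1, ha, hb]
        rcases hT with h' | h' <;> rw [h'] <;> omega
      · rw [h, hsp.2, ha, hb]
        rcases hT with h' | h' <;> rw [h'] <;> omega
  intro j
  refine ⟨fun i hi => ?_, ?_⟩
  · rw [hc j]; exact key j i hi
  · rw [hc j]; have := hab1 j; omega
end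

section
/- Let A be an n×N matrix in which every nonzero entry is ±1 and every column has exactly d nonzeros, and suppose the underlying 0/1 support matrix is the adjacency matrix of a (k, d, ε)-lossless expander. Then for every x ∈ ℝ^N with at most k nonzeros, ‖Ax‖₁ ≥ (1 - 2ε) d ‖x‖₁ and ‖Ax‖₁ ≤ d‖x‖₁. -/
open Finset

private lemma sse_key (n N d k : ℕ) (ε : ℝ) (A : Matrix (Fin n) (Fin N) ℝ)
    (hexpand : ∀ X : Finset (Fin N), X.card ≤ k →
      ((@filter _ (fun i => ∃ j ∈ X, A i j ≠ 0) (fun _ => inferInstance) univ).card : ℝ) ≥ (1 - ε) * d * X.card) :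
    ∀ c : ℕ, ∀ w : Fin N → NNReal,
      (univ.filter (fun j => w j ≠ 0)).card = c →
      (univ.filter (fun j => w j ≠ 0)).card ≤ k →
      (1 - ε) * d * ∑ j, (w j : ℝ) ≤ ∑ i, (((univ.filter (fun j => A i j ≠ 0)).sup w : NNReal) : ℝ) := by
  intro c
  induction c using Nat.strong_induction_on with
  | _ c IH =>
    intro w hc hk
    by_cases hS : (univ.filter (fun j => w j ≠ 0)) = ∅
    · have hz : ∀ j, w j = 0 := by
        intro j
        by_contra h
        have : j ∈ univ.filter (fun j => w j ≠ 0) := by simp [h]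
        simp [hS] at this
      have h1 : ∑ j, ((w j : NNReal) : ℝ) = 0 := by simp [hz]
      rw [h1, mul_zero]
      positivity
    · have hS' : (univ.filter (fun j => w j ≠ 0)).Nonempty := nonempty_iff_ne_empty.mpr hS
      set S := univ.filter (fun j => w j ≠ 0) with hSdef
      set m := S.inf' hS' w with hmdef
      obtain ⟨j₀, hj₀S, hj₀⟩ := Finset.exists_mem_eq_inf' hS' w
      have hmle : ∀ j ∈ S, m ≤ w j := fun j hj => Finset.inf'_le w hj
      set w' : Fin N → NNReal := fun j => w j - m with hw'def
      have hsub : (univ.filter (fun j => w' j ≠ 0)) ⊆ S := by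
        intro j hj
        simp only [mem_filter, mem_univ, true_and] at hj
        simp only [hSdef, mem_filter, mem_univ, true_and]
        intro h
        apply hj
        simp [hw'def, h, zero_tsub]
      have hj₀not : j₀ ∉ (univ.filter (fun j => w' j ≠ 0)) := by
        simp [hw'def, ← hj₀, ← hmdef]
      have hss : (univ.filter (fun j => w' j ≠ 0)) ⊂ S := ⟨hsub, fun h => hj₀not (h hj₀S)⟩
      have hcard : (univ.filter (fun j => w' j ≠ 0)).card < c := hc ▸ Finset.card_lt_card hss
      have hk' : (univ.filter (fun j => w' j ≠ 0)).card ≤ k :=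
        le_trans (Finset.card_le_card hsub) hk
      have h1 := IH _ hcard w' rfl hk'
      -- sum identity
      have hsum : ∑ j, ((w j : NNReal) : ℝ) = (∑ j, ((w' j : NNReal) : ℝ)) + (m : ℝ) * S.card := by
        have : ∀ j, ((w j : NNReal) : ℝ) = ((w' j : NNReal) : ℝ) + (if j ∈ S then (m : ℝ) else 0) := by
          intro j
          by_cases hj : j ∈ S
          · have : w' j + m = w j := tsub_add_cancel_of_le (hmle j hj)
            simp only [hj, if_pos]
            rw [← this]
            push_cast
            ring
          · have hwj : w j = 0 := by
              by_contra h
              exact hj (by simp [hSdef, h])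
            simp [hw'def, hwj, hj, zero_tsub]
          
        rw [Finset.sum_congr rfl (fun j _ => this j), Finset.sum_add_distrib,
          Finset.sum_ite_mem, Finset.univ_inter, Finset.sum_const, nsmul_eq_mul]
        ring
      -- row bound
      have hrow : ∀ i, (((univ.filter (fun j => A i j ≠ 0)).sup w' : NNReal) : ℝ)
          + (if ∃ j ∈ S, A i j ≠ 0 then (m : ℝ) else 0)
          ≤ (((univ.filter (fun j => A i j ≠ 0)).sup w : NNReal) : ℝ) := by
        intro i
        by_cases hΓ : ∃ j ∈ S, A i j ≠ 0
        · simp only [hΓ, if_pos]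
          obtain ⟨j, hjS, hAij⟩ := hΓ
          have hjR : j ∈ univ.filter (fun j => A i j ≠ 0) := by simp [hAij]
          have hR : (univ.filter (fun j => A i j ≠ 0)).Nonempty := ⟨j, hjR⟩
          obtain ⟨j', hj'R, hj'⟩ := Finset.exists_mem_eq_sup _ hR w'
          rw [hj']
          have key : w' j' + m ≤ (univ.filter (fun j => A i j ≠ 0)).sup w := by
            by_cases hcase : m ≤ w j'
            · have : w' j' + m = w j' := tsub_add_cancel_of_le hcase
              rw [this]
              exact Finset.le_sup hj'R
            · push_neg at hcase
              have : w' j' = 0 := tsub_eq_zero_of_le hcase.le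
              rw [this, zero_add]
              exact le_trans (hmle j hjS) (Finset.le_sup hjR)
          have := NNReal.coe_le_coe.mpr key
          push_cast at this
          linarith
        · simp only [hΓ, if_neg, not_false_iff, add_zero]
          exact NNReal.coe_le_coe.mpr
            (Finset.sup_mono_fun (fun j _ => tsub_le_self))
      have h4 : (∑ i, (((univ.filter (fun j => A i j ≠ 0)).sup w' : NNReal) : ℝ))
          + (m : ℝ) * (@filter _ (fun i => ∃ j ∈ S, A i j ≠ 0) (fun _ => inferInstance) univ).card
          ≤ ∑ i, (((univ.filter (fun j => A i j ≠ 0)).sup w : NNReal) : ℝ) := by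
        have := Finset.sum_le_sum (fun i (_ : i ∈ univ) => hrow i)
        rw [Finset.sum_add_distrib, ← Finset.sum_filter, Finset.sum_const,
          nsmul_eq_mul, mul_comm] at this
        exact this
      have h2 := hexpand S hk
      have h5 : (m : ℝ) * ((1 - ε) * d * S.card)
          ≤ (m : ℝ) * (@filter _ (fun i => ∃ j ∈ S, A i j ≠ 0) (fun _ => inferInstance) univ).card :=
        mul_le_mul_of_nonneg_left h2 m.coe_nonneg
      rw [hsum]
      nlinarith [h1, h4, h5]

theorem stmt_17 (n N d k : ℕ) (ε : ℝ) (A : Matrix (Fin n) (Fin N) ℝ)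
    (hsign : ∀ i j, A i j = 0 ∨ A i j = 1 ∨ A i j = -1)
    (hcol : ∀ j, (univ.filter (fun i => A i j ≠ 0)).card = d)
    (hexpand : ∀ X : Finset (Fin N), X.card ≤ k →
      ((@filter _ (fun i => ∃ j ∈ X, A i j ≠ 0) (fun _ => inferInstance) univ).card : ℝ) ≥ (1 - ε) * d * X.card)
    (x : Fin N → ℝ) (hx : (univ.filter (fun j => x j ≠ 0)).card ≤ k) :
    ∑ i, |A.mulVec x i| ≥ (1 - 2 * ε) * d * ∑ j, |x j| ∧
    ∑ i, |A.mulVec x i| ≤ d * ∑ j, |x j| := by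
  set w : Fin N → NNReal := fun j => Real.nnabs (x j) with hwdef
  have hw : ∀ j, ((w j : NNReal) : ℝ) = |x j| := fun j => Real.coe_nnabs _
  have hfilt : univ.filter (fun j => w j ≠ 0) = univ.filter (fun j => x j ≠ 0) := by
    ext j
    simp only [mem_filter, mem_univ, true_and, Ne, ← NNReal.coe_eq_zero, hw j, abs_eq_zero]
  have habs : ∀ i j, |A i j| = if A i j ≠ 0 then 1 else 0 := by
    intro i j
    rcases hsign i j with h | h | h <;> simp [h]
  have hmv : ∀ i, A.mulVec x i = ∑ j, A i j * x j := by
    intro i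
    simp [Matrix.mulVec, dotProduct]
  -- total weight of absolute entries
  have htot : ∑ i, ∑ j, |A i j * x j| = (d : ℝ) * ∑ j, |x j| := by
    rw [Finset.sum_comm, Finset.mul_sum]
    refine Finset.sum_congr rfl fun j _ => ?_
    have : ∀ i, |A i j * x j| = (if A i j ≠ 0 then 1 else 0) * |x j| := by
      intro i; rw [abs_mul, habs]
    rw [Finset.sum_congr rfl fun i _ => this i, ← Finset.sum_mul, ← Finset.sum_filter,
      Finset.sum_const, nsmul_eq_mul, mul_one, hcol j]
  have hupper : ∑ i, |A.mulVec x i| ≤ (d : ℝ) * ∑ j, |x j| := by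
    rw [← htot]
    exact Finset.sum_le_sum fun i _ => by
      rw [hmv i]; exact Finset.abs_sum_le_sum_abs _ _
  constructor
  swap
  · exact hupper
  -- lower bound
  have hkey := sse_key n N d k ε A hexpand _ w rfl (by rw [hfilt]; exact hx)
  have hM : ∀ i, 2 * (((univ.filter (fun j => A i j ≠ 0)).sup w : NNReal) : ℝ)
      - ∑ j, |A i j * x j| ≤ |A.mulVec x i| := by
    intro i
    by_cases hR : (univ.filter (fun j => A i j ≠ 0)).Nonempty
    · obtain ⟨j', hj'R, hj'⟩ := Finset.exists_mem_eq_sup _ hR w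
      rw [hj', hw j']
      have hAij : A i j' ≠ 0 := by
        simpa using (Finset.mem_filter.mp hj'R).2
      have h1 : |A i j' * x j'| = |x j'| := by
        rw [abs_mul, habs, if_pos hAij, one_mul]
      have hsplit : ∑ j, A i j * x j = A i j' * x j' + ∑ j ∈ univ.erase j', A i j * x j :=
        (Finset.add_sum_erase _ _ (mem_univ j')).symm
      have hsplit2 : ∑ j, |A i j * x j| = |A i j' * x j'| + ∑ j ∈ univ.erase j', |A i j * x j| :=
        (Finset.add_sum_erase _ _ (mem_univ j')).symm
      have h2 : |∑ j ∈ univ.erase j', A i j * x j| ≤ ∑ j ∈ univ.erase j', |A i j * x j| :=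
        Finset.abs_sum_le_sum_abs _ _
      have h3 : |A i j' * x j'| - |∑ j ∈ univ.erase j', A i j * x j| ≤ |A.mulVec x i| := by
        rw [hmv i, hsplit]
        have := abs_add_le (A i j' * x j' + ∑ j ∈ univ.erase j', A i j * x j)
          (-(∑ j ∈ univ.erase j', A i j * x j))
        simp only [add_neg_cancel_right, abs_neg] at this
        linarith
      rw [hsplit2]
      linarith [h1, h2, h3]
    · rw [Finset.not_nonempty_iff_eq_empty.mp hR]
      simp only [Finset.sup_empty, bot_eq_zero', NNReal.coe_zero, mul_zero, zero_sub]
      have : (0:ℝ) ≤ ∑ j, |A i j * x j| := Finset.sum_nonneg fun j _ => abs_nonneg _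
      have : (0:ℝ) ≤ |A.mulVec x i| := abs_nonneg _
      linarith [Finset.sum_nonneg (fun j (_ : j ∈ (univ : Finset (Fin N))) => abs_nonneg (A i j * x j))]
  have hsumM := Finset.sum_le_sum fun i (_ : i ∈ (univ : Finset (Fin n))) => hM i
  rw [Finset.sum_sub_distrib, htot] at hsumM
  have hxw : ∑ j, ((w j : NNReal) : ℝ) = ∑ j, |x j| := Finset.sum_congr rfl fun j _ => hw j
  rw [hxw] at hkey
  have h2M : ∑ i, 2 * (((univ.filter (fun j => A i j ≠ 0)).sup w : NNReal) : ℝ)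
      = 2 * ∑ i, (((univ.filter (fun j => A i j ≠ 0)).sup w : NNReal) : ℝ) := by
    rw [Finset.mul_sum]
  rw [h2M] at hsumM
  nlinarith [hkey, hsumM]
end
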